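/- Let Y₁, …, Yₙ₋₁, Yₙ be i.i.d. nonnegative and ε₁, …, εₙ i.i.d. uniform signs independent of the Yᵢ; set Sₖ = Σ_{i≤k} εᵢYᵢ. Then P(sgn(Sₙ) ≠ sgn(Sₙ₋₁)) ≤ P(|Sₙ₋₁| ≤ Yₙ) = 1 − 2·P(sgn(Sₙ) = −εₙ). -/

import Mathlib

open MeasureTheory ProbabilityTheory
open scoped ENNReal

lemma aux_measurable_sign : Measurable Real.sign := by
  have h : Real.sign = fun r : ℝ => if r < 0 then (-1:ℝ) else if 0 < r then 1 else 0 := by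
    funext r; rfl
  rw [h]
  exact Measurable.ite (measurableSet_lt measurable_id measurable_const) measurable_const
    (Measurable.ite (measurableSet_lt measurable_const measurable_id) measurable_const
      measurable_const)

lemma aux_sign_neg_iff (x : ℝ) : Real.sign x = -1 ↔ x < 0 := by
  constructor
  · intro h
    rcases lt_trichotomy x 0 with h1 | h1 | h1
    · exact h1
    · rw [h1, Real.sign_zero] at h; norm_num at h
    · rw [Real.sign_of_pos h1] at h; norm_num at h
  · exact Real.sign_of_neg

lemma aux_sign_pos_iff (x : ℝ) : Real.sign x = 1 ↔ 0 < x := by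
  constructor
  · intro h
    rcases lt_trichotomy x 0 with h1 | h1 | h1
    · rw [Real.sign_of_neg h1] at h; norm_num at h
    · rw [h1, Real.sign_zero] at h; norm_num at h
    · exact h1
  · exact Real.sign_of_pos

lemma aux_law {Ω : Type*} [MeasurableSpace Ω] (P : Measure Ω) [IsProbabilityMeasure P]
    (e : Ω → ℝ) (he : Measurable e) (h1 : P {ω | e ω = 1} = 1/2)
    (h2 : P {ω | e ω = -1} = 1/2) :
    P.map e = (1/2 : ℝ≥0∞) • Measure.dirac (1:ℝ) + (1/2 : ℝ≥0∞) • Measure.dirac (-1:ℝ) := by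
  have hA : MeasurableSet {ω | e ω = 1} := he (measurableSet_singleton 1)
  have hB : MeasurableSet {ω | e ω = -1} := he (measurableSet_singleton (-1))
  have hd : Disjoint {ω | e ω = 1} {ω | e ω = -1} := by
    rw [Set.disjoint_left]
    intro ω ha hb
    simp only [Set.mem_setOf_eq] at ha hb
    rw [ha] at hb; norm_num at hb
  have hu : P ({ω | e ω = 1} ∪ {ω | e ω = -1}) = 1 := by
    rw [measure_union hd hB, h1, h2]
    rw [ENNReal.add_halves]
  have hc : P ({ω | e ω = 1} ∪ {ω | e ω = -1})ᶜ = 0 := by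
    rw [measure_compl (hA.union hB) (measure_ne_top _ _), hu, measure_univ, tsub_self]
  ext s hs
  rw [Measure.map_apply he hs]
  have hsplit : P (e ⁻¹' s) = P (e ⁻¹' s ∩ {ω | e ω = 1}) + P (e ⁻¹' s ∩ {ω | e ω = -1}) := by
    rw [← measure_inter_conull hc, Set.inter_union_distrib_left,
      measure_union (hd.mono Set.inter_subset_right Set.inter_subset_right)
        ((he hs).inter hB)]
  have hsA1 : (1:ℝ) ∈ s → e ⁻¹' s ∩ {ω | e ω = 1} = {ω | e ω = 1} := by
    intro h
    ext ω
    simp only [Set.mem_inter_iff, Set.mem_preimage, Set.mem_setOf_eq]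
    exact ⟨fun hh => hh.2, fun hh => ⟨by rw [hh]; exact h, hh⟩⟩
  have hsA0 : (1:ℝ) ∉ s → e ⁻¹' s ∩ {ω | e ω = 1} = ∅ := by
    intro h
    ext ω
    simp only [Set.mem_inter_iff, Set.mem_preimage, Set.mem_setOf_eq, Set.mem_empty_iff_false,
      iff_false, not_and]
    intro hs' he'
    rw [he'] at hs'; exact h hs'
  have hsB1 : (-1:ℝ) ∈ s → e ⁻¹' s ∩ {ω | e ω = -1} = {ω | e ω = -1} := by
    intro h
    ext ω
    simp only [Set.mem_inter_iff, Set.mem_preimage, Set.mem_setOf_eq]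
    exact ⟨fun hh => hh.2, fun hh => ⟨by rw [hh]; exact h, hh⟩⟩
  have hsB0 : (-1:ℝ) ∉ s → e ⁻¹' s ∩ {ω | e ω = -1} = ∅ := by
    intro h
    ext ω
    simp only [Set.mem_inter_iff, Set.mem_preimage, Set.mem_setOf_eq, Set.mem_empty_iff_false,
      iff_false, not_and]
    intro hs' he'
    rw [he'] at hs'; exact h hs'
  rw [hsplit]
  simp only [Measure.coe_add, Pi.add_apply, Measure.smul_apply, smul_eq_mul,
    Measure.dirac_apply' _ hs, Set.indicator_apply]
  by_cases h1s : (1:ℝ) ∈ s <;> by_cases h2s : (-1:ℝ) ∈ s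
  · rw [hsA1 h1s, hsB1 h2s, h1, h2]
    simp [h1s, h2s]
  · rw [hsA1 h1s, hsB0 h2s, h1]
    simp [h1s, h2s]
  · rw [hsA0 h1s, hsB1 h2s, h2]
    simp [h1s, h2s]
  · rw [hsA0 h1s, hsB0 h2s]
    simp [h1s, h2s]

lemma aux_map_pi {Ω ι : Type*} [MeasurableSpace Ω] [Fintype ι] (P : Measure Ω)
    [IsProbabilityMeasure P] (f : ι → Ω → ℝ) (hm : ∀ i, Measurable (f i))
    (h : iIndepFun f P) :
    P.map (fun ω i => f i ω) = Measure.pi (fun i => P.map (f i)) := by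
  haveI : ∀ i, IsProbabilityMeasure (P.map (f i)) :=
    fun i => Measure.isProbabilityMeasure_map (hm i).aemeasurable
  refine (Measure.pi_eq fun s hs => ?_).symm
  rw [Measure.map_apply (measurable_pi_lambda _ hm) (MeasurableSet.univ_pi hs)]
  have he : (fun ω i => f i ω) ⁻¹' Set.pi Set.univ s = ⋂ i ∈ Finset.univ, f i ⁻¹' s i := by
    ext ω
    simp [Set.mem_pi]
  rw [he, h.measure_inter_preimage_eq_mul Finset.univ (fun i _ => hs i)]
  refine Finset.prod_congr rfl fun i _ => ?_
  rw [Measure.map_apply (hm i) (hs i)]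

theorem stmt_10 {Ω : Type*} [MeasurableSpace Ω] (P : Measure Ω) [IsProbabilityMeasure P]
    (n : ℕ) (hn : 0 < n) (Y ε : Fin n → Ω → ℝ)
    (hYm : ∀ i, Measurable (Y i)) (hεm : ∀ i, Measurable (ε i))
    (hYpos : ∀ i ω, 0 ≤ Y i ω)
    (hYid : ∀ i j, IdentDistrib (Y i) (Y j) P P)
    (hε : ∀ i, P {ω | ε i ω = 1} = 1/2 ∧ P {ω | ε i ω = -1} = 1/2)
    (hindep : iIndepFun (Sum.elim Y ε : Fin n ⊕ Fin n → Ω → ℝ) P)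
    (L : Fin n) (hL : (L : ℕ) = n - 1) :
    P {ω | Real.sign (∑ i, ε i ω * Y i ω) ≠
           Real.sign (∑ i, ε i ω * Y i ω - ε L ω * Y L ω)} ≤
      P {ω | |∑ i, ε i ω * Y i ω - ε L ω * Y L ω| ≤ Y L ω} ∧
    P {ω | |∑ i, ε i ω * Y i ω - ε L ω * Y L ω| ≤ Y L ω} =
      1 - 2 * P {ω | Real.sign (∑ i, ε i ω * Y i ω) = -(ε L ω)} := by
  classical
  -- the partial sum without coordinate L
  set S' : Ω → ℝ := fun ω => ∑ i ∈ Finset.univ.erase L, ε i ω * Y i ω with hS'def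
  have hsub : ∀ ω, (∑ i, ε i ω * Y i ω) - ε L ω * Y L ω = S' ω := by
    intro ω
    have h := Finset.sum_erase_add Finset.univ (fun i => ε i ω * Y i ω) (Finset.mem_univ L)
    rw [hS'def]
    dsimp only
    linarith [h]
  have hS'm : Measurable S' := Finset.measurable_sum _ (fun i _ => (hεm i).mul (hYm i))
  have hSm : Measurable (fun ω => ∑ i, ε i ω * Y i ω) :=
    Finset.measurable_sum _ (fun i _ => (hεm i).mul (hYm i))
  -- ε L is a.s. ±1
  have hnullL : P ({ω | ε L ω = 1} ∪ {ω | ε L ω = -1})ᶜ = 0 := by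
    have hA : MeasurableSet {ω | ε L ω = 1} := hεm L (measurableSet_singleton 1)
    have hB : MeasurableSet {ω | ε L ω = -1} := hεm L (measurableSet_singleton (-1))
    have hd : Disjoint {ω | ε L ω = 1} {ω | ε L ω = -1} := by
      rw [Set.disjoint_left]
      intro ω ha hb
      simp only [Set.mem_setOf_eq] at ha hb
      rw [ha] at hb; norm_num at hb
    have hu : P ({ω | ε L ω = 1} ∪ {ω | ε L ω = -1}) = 1 := by
      rw [measure_union hd hB, (hε L).1, (hε L).2, ENNReal.add_halves]
    rw [measure_compl (hA.union hB) (measure_ne_top _ _), hu, measure_univ, tsub_self]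
  have hεa : ∀ᵐ ω ∂P, ε L ω = 1 ∨ ε L ω = -1 := by
    rw [ae_iff]
    have he : {ω | ¬(ε L ω = 1 ∨ ε L ω = -1)} = ({ω | ε L ω = 1} ∪ {ω | ε L ω = -1})ᶜ := by
      ext ω; simp [not_or]
    rw [he]; exact hnullL
  -- Part 1
  have part1 : P {ω | Real.sign (∑ i, ε i ω * Y i ω) ≠
      Real.sign (∑ i, ε i ω * Y i ω - ε L ω * Y L ω)} ≤
      P {ω | |∑ i, ε i ω * Y i ω - ε L ω * Y L ω| ≤ Y L ω} := by
    refine measure_mono_ae ?_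
    filter_upwards [hεa] with ω hω hne
    replace hne : Real.sign (∑ i, ε i ω * Y i ω) ≠
        Real.sign (∑ i, ε i ω * Y i ω - ε L ω * Y L ω) := hne
    show |∑ i, ε i ω * Y i ω - ε L ω * Y L ω| ≤ Y L ω
    by_contra hc
    push_neg at hc
    rw [hsub ω] at hc
    apply hne
    rw [hsub ω]
    have htabs : |ε L ω * Y L ω| ≤ Y L ω := by
      rcases hω with h | h <;> rw [h]
      · rw [one_mul, abs_of_nonneg (hYpos L ω)]
      · rw [neg_one_mul, abs_neg, abs_of_nonneg (hYpos L ω)]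
    obtain ⟨ht1, ht2⟩ := abs_le.mp htabs
    have hSeq : (∑ i, ε i ω * Y i ω) = S' ω + ε L ω * Y L ω := by
      have := hsub ω; linarith
    rcases lt_trichotomy (S' ω) 0 with h1 | h1 | h1
    · have habs : |S' ω| = -(S' ω) := abs_of_neg h1
      rw [habs] at hc
      rw [Real.sign_of_neg h1, Real.sign_of_neg (by linarith : (∑ i, ε i ω * Y i ω) < 0)]
    · exfalso
      rw [h1] at hc
      simp only [abs_zero] at hc
      exact absurd hc (not_lt.mpr (hYpos L ω))
    · have habs : |S' ω| = S' ω := abs_of_pos h1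
      rw [habs] at hc
      rw [Real.sign_of_pos h1, Real.sign_of_pos (by linarith : 0 < (∑ i, ε i ω * Y i ω))]
  refine ⟨part1, ?_⟩
  -- measurability of the coordinates
  have hfm : ∀ i, Measurable (Sum.elim Y ε i : Ω → ℝ) := by
    intro i
    cases i with
    | inl j => exact hYm j
    | inr j => exact hεm j
  -- the pair (S', Y L) is independent of ε L
  set Sf : Finset (Fin n ⊕ Fin n) := Finset.univ.erase (Sum.inr L) with hSf
  have hmemr : ∀ i : Fin n, i ≠ L → Sum.inr i ∈ Sf := by
    intro i hi
    rw [hSf]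
    exact Finset.mem_erase.2 ⟨by simpa using hi, Finset.mem_univ _⟩
  have hmeml : ∀ i : Fin n, Sum.inl i ∈ Sf := by
    intro i
    rw [hSf]
    exact Finset.mem_erase.2 ⟨by simp, Finset.mem_univ _⟩
  have hpair : IndepFun (fun ω => (S' ω, Y L ω)) (ε L) P := by
    have hd : Disjoint Sf ({Sum.inr L} : Finset (Fin n ⊕ Fin n)) := by
      rw [Finset.disjoint_singleton_right, hSf]
      exact Finset.notMem_erase _ _
    set ext0 : (Sf → ℝ) → (Fin n ⊕ Fin n) → ℝ :=
      fun v j => if h : j ∈ Sf then v ⟨j, h⟩ else 0 with hext0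
    have hextm : ∀ c, Measurable (fun v : Sf → ℝ => ext0 v c) := by
      intro c
      by_cases h : c ∈ Sf
      · have he : (fun v : Sf → ℝ => ext0 v c) = fun v => v ⟨c, h⟩ := by
          funext v; simp only [hext0]; rw [dif_pos h]
        rw [he]; exact measurable_pi_apply _
      · have he : (fun v : Sf → ℝ => ext0 v c) = fun _ => 0 := by
          funext v; simp only [hext0]; rw [dif_neg h]
        rw [he]; exact measurable_const
    set φ : (Sf → ℝ) → ℝ × ℝ := fun v =>
      (∑ i ∈ Finset.univ.erase L, ext0 v (Sum.inr i) * ext0 v (Sum.inl i), ext0 v (Sum.inl L))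
      with hφ
    have hφm : Measurable φ :=
      (Finset.measurable_sum _ fun i _ => (hextm _).mul (hextm _)).prodMk (hextm _)
    set ψ : (({Sum.inr L} : Finset (Fin n ⊕ Fin n)) → ℝ) → ℝ :=
      fun v => v ⟨Sum.inr L, Finset.mem_singleton_self _⟩ with hψ
    have hψm : Measurable ψ := measurable_pi_apply _
    have h := (hindep.indepFun_finset Sf {Sum.inr L} hd hfm).comp hφm hψm
    have h1 : (φ ∘ fun a (i : Sf) => Sum.elim Y ε i a) = fun ω => (S' ω, Y L ω) := by
      funext ω
      rw [Function.comp_apply]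
      simp only [hφ]
      congr 1
      · rw [hS'def]
        dsimp only
        refine Finset.sum_congr rfl fun i hi => ?_
        have hiL : i ≠ L := Finset.ne_of_mem_erase hi
        simp only [hext0]
        rw [dif_pos (hmemr i hiL), dif_pos (hmeml i)]
        rfl
      · simp only [hext0]
        rw [dif_pos (hmeml L)]
        rfl
    have h2 : (ψ ∘ fun a (i : ({Sum.inr L} : Finset (Fin n ⊕ Fin n))) => Sum.elim Y ε i a)
        = ε L := rfl
    rw [h1, h2] at h
    exact h
  have hB1m : MeasurableSet {ω | S' ω + Y L ω < 0} :=
    measurableSet_lt (hS'm.add (hYm L)) measurable_const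
  have hB2m : MeasurableSet {ω | 0 < S' ω - Y L ω} :=
    measurableSet_lt measurable_const (hS'm.sub (hYm L))
  have hI1 : P ({ω | S' ω + Y L ω < 0} ∩ {ω | ε L ω = 1})
      = P {ω | S' ω + Y L ω < 0} * (1/2) := by
    have hcomp : IndepFun (fun ω => S' ω + Y L ω) (ε L) P := by
      have h := hpair.comp (measurable_fst.add measurable_snd) measurable_id
      exact h
    have h := hcomp.measure_inter_preimage_eq_mul (s := Set.Iio 0) (t := {1})
      measurableSet_Iio (measurableSet_singleton 1)
    have e1 : (fun ω => S' ω + Y L ω) ⁻¹' Set.Iio 0 = {ω | S' ω + Y L ω < 0} := rfl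
    have e2 : ε L ⁻¹' {1} = {ω | ε L ω = 1} := rfl
    rw [e1, e2] at h
    rw [h, (hε L).1]
  have hI2 : P ({ω | 0 < S' ω - Y L ω} ∩ {ω | ε L ω = -1})
      = P {ω | 0 < S' ω - Y L ω} * (1/2) := by
    have hcomp : IndepFun (fun ω => S' ω - Y L ω) (ε L) P := by
      have h := hpair.comp (measurable_fst.sub measurable_snd) measurable_id
      exact h
    have h := hcomp.measure_inter_preimage_eq_mul (s := Set.Ioi 0) (t := {-1})
      measurableSet_Ioi (measurableSet_singleton (-1))
    have e1 : (fun ω => S' ω - Y L ω) ⁻¹' Set.Ioi 0 = {ω | 0 < S' ω - Y L ω} := rfl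
    have e2 : ε L ⁻¹' {-1} = {ω | ε L ω = -1} := rfl
    rw [e1, e2] at h
    rw [h, (hε L).2]
  -- symmetry: flip the signs away from L
  set σ : (Fin n ⊕ Fin n) → ℝ → ℝ :=
    Sum.elim (fun _ x => x) (fun j x => if j = L then x else -x) with hσ
  have hσm : ∀ i, Measurable (σ i) := by
    intro i
    cases i with
    | inl j => exact measurable_id
    | inr j =>
      by_cases h : j = L
      · have he : σ (Sum.inr j) = fun x => x := by
          funext x; simp only [hσ, Sum.elim_inr]; rw [if_pos h]
        rw [he]; exact measurable_id
      · have he : σ (Sum.inr j) = fun x => -x := by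
          funext x; simp only [hσ, Sum.elim_inr]; rw [if_neg h]
        rw [he]; exact measurable_neg
  have hgm : ∀ i, Measurable ((σ i) ∘ Sum.elim Y ε i) := fun i => (hσm i).comp (hfm i)
  have hgindep : iIndepFun (fun i => σ i ∘ Sum.elim Y ε i) P :=
    hindep.comp σ hσm
  have hmarg : ∀ i, P.map (σ i ∘ Sum.elim Y ε i) = P.map (Sum.elim Y ε i) := by
    intro i
    cases i with
    | inl j => rfl
    | inr j =>
      by_cases h : j = L
      · have hid : σ (Sum.inr j) ∘ Sum.elim Y ε (Sum.inr j) = Sum.elim Y ε (Sum.inr j) := by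
          funext ω; simp only [hσ, Sum.elim_inr, Function.comp_apply]; rw [if_pos h]
        rw [hid]
      · have hneg : σ (Sum.inr j) ∘ Sum.elim Y ε (Sum.inr j) = fun ω => -(ε j ω) := by
          funext ω; simp only [hσ, Sum.elim_inr, Function.comp_apply]; rw [if_neg h]
        rw [hneg]
        have e1 := aux_law P (ε j) (hεm j) (hε j).1 (hε j).2
        have s1 : {ω | -(ε j ω) = 1} = {ω | ε j ω = -1} := by
          ext ω
          simp only [Set.mem_setOf_eq]
          constructor <;> intro hh <;> linarith
        have s2 : {ω | -(ε j ω) = -1} = {ω | ε j ω = 1} := by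
          ext ω
          simp only [Set.mem_setOf_eq]
          constructor <;> intro hh <;> linarith
        have e2 := aux_law P (fun ω => -(ε j ω)) (hεm j).neg
          (by rw [s1]; exact (hε j).2) (by rw [s2]; exact (hε j).1)
        show P.map (fun ω => -(ε j ω)) = P.map (ε j)
        rw [e1, e2]
  have hmapeq : P.map (fun ω i => (σ i ∘ Sum.elim Y ε i) ω)
      = P.map (fun ω i => Sum.elim Y ε i ω) := by
    rw [aux_map_pi P _ hgm hgindep, aux_map_pi P _ hfm hindep]
    exact congrArg Measure.pi (funext hmarg)
  set Φ : ((Fin n ⊕ Fin n) → ℝ) → ℝ := fun v =>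
    (∑ i ∈ Finset.univ.erase L, v (Sum.inr i) * v (Sum.inl i)) + v (Sum.inl L) with hΦ
  have hΦm : Measurable Φ := by
    rw [hΦ]
    apply Measurable.add
    · apply Finset.measurable_sum
      intro i _
      exact (measurable_pi_apply _).mul (measurable_pi_apply _)
    · exact measurable_pi_apply _
  have hFm : Measurable (fun ω (i : Fin n ⊕ Fin n) => Sum.elim Y ε i ω) :=
    measurable_pi_lambda _ hfm
  have hGm : Measurable (fun ω (i : Fin n ⊕ Fin n) => (σ i ∘ Sum.elim Y ε i) ω) :=
    measurable_pi_lambda _ hgm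
  have hkey : P {ω | S' ω + Y L ω < 0} = P {ω | 0 < S' ω - Y L ω} := by
    have h1 : {ω | S' ω + Y L ω < 0}
        = (fun ω (i : Fin n ⊕ Fin n) => Sum.elim Y ε i ω) ⁻¹' (Φ ⁻¹' Set.Iio 0) := by
      ext ω
      simp only [Set.mem_setOf_eq, Set.mem_preimage, Set.mem_Iio, hΦ, Sum.elim_inl, Sum.elim_inr, hS'def]
    have h2 : {ω | 0 < S' ω - Y L ω}
        = (fun ω (i : Fin n ⊕ Fin n) => (σ i ∘ Sum.elim Y ε i) ω) ⁻¹' (Φ ⁻¹' Set.Iio 0) := by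
      ext ω
      simp only [Set.mem_setOf_eq, Set.mem_preimage, Set.mem_Iio, hΦ, Function.comp_apply,
        Sum.elim_inl, Sum.elim_inr, hσ]
      have hsum : (∑ i ∈ Finset.univ.erase L,
          (if i = L then ε i ω else -(ε i ω)) * Y i ω) = -(S' ω) := by
        rw [hS'def]
        dsimp only
        rw [← Finset.sum_neg_distrib]
        refine Finset.sum_congr rfl fun i hi => ?_
        rw [if_neg (Finset.ne_of_mem_erase hi)]
        ring
      rw [hsum]
      constructor <;> intro hh <;> linarith
    rw [h1, h2, ← Measure.map_apply hFm (hΦm measurableSet_Iio),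
      ← Measure.map_apply hGm (hΦm measurableSet_Iio), hmapeq]
  -- assembling
  set A : Set Ω := {ω | Real.sign (∑ i, ε i ω * Y i ω) = -(ε L ω)} with hA
  have hAm : MeasurableSet A :=
    measurableSet_eq_fun (aux_measurable_sign.comp hSm) (hεm L).neg
  have hE1m : MeasurableSet {ω | ε L ω = 1} := hεm L (measurableSet_singleton 1)
  have hE2m : MeasurableSet {ω | ε L ω = -1} := hεm L (measurableSet_singleton (-1))
  have hA1 : A ∩ {ω | ε L ω = 1} = {ω | S' ω + Y L ω < 0} ∩ {ω | ε L ω = 1} := by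
    ext ω
    simp only [hA, Set.mem_inter_iff, Set.mem_setOf_eq]
    constructor
    · rintro ⟨h1, h2⟩
      refine ⟨?_, h2⟩
      rw [h2] at h1
      have h3 := hsub ω
      rw [h2, one_mul] at h3
      have h4 := (aux_sign_neg_iff _).mp h1
      linarith
    · rintro ⟨h1, h2⟩
      refine ⟨?_, h2⟩
      have h3 := hsub ω
      rw [h2, one_mul] at h3
      rw [h2]
      exact Real.sign_of_neg (by linarith)
  have hA2 : A ∩ {ω | ε L ω = -1} = {ω | 0 < S' ω - Y L ω} ∩ {ω | ε L ω = -1} := by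
    ext ω
    simp only [hA, Set.mem_inter_iff, Set.mem_setOf_eq]
    constructor
    · rintro ⟨h1, h2⟩
      refine ⟨?_, h2⟩
      rw [h2, neg_neg] at h1
      have h3 := hsub ω
      rw [h2, neg_one_mul, sub_neg_eq_add] at h3
      have h4 := (aux_sign_pos_iff _).mp h1
      linarith
    · rintro ⟨h1, h2⟩
      refine ⟨?_, h2⟩
      have h3 := hsub ω
      rw [h2, neg_one_mul, sub_neg_eq_add] at h3
      rw [h2, neg_neg]
      exact Real.sign_of_pos (by linarith)
  have hPA : P A = P {ω | 0 < S' ω - Y L ω} := by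
    have hsplitA : P A = P (A ∩ {ω | ε L ω = 1}) + P (A ∩ {ω | ε L ω = -1}) := by
      rw [← measure_inter_conull hnullL, Set.inter_union_distrib_left,
        measure_union ?dd (hAm.inter hE2m)]
      case dd =>
        have hd : Disjoint {ω | ε L ω = 1} {ω | ε L ω = -1} := by
          rw [Set.disjoint_left]
          intro ω ha hb
          simp only [Set.mem_setOf_eq] at ha hb
          rw [ha] at hb
          norm_num at hb
        exact hd.mono Set.inter_subset_right Set.inter_subset_right
    rw [hsplitA, hA1, hA2, hI1, hI2, hkey, ← mul_add, ENNReal.add_halves, mul_one]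
  have hcompl : {ω | |∑ i, ε i ω * Y i ω - ε L ω * Y L ω| ≤ Y L ω}ᶜ
      = {ω | S' ω + Y L ω < 0} ∪ {ω | 0 < S' ω - Y L ω} := by
    ext ω
    simp only [Set.mem_compl_iff, Set.mem_setOf_eq, Set.mem_union, not_le, hsub ω]
    rw [lt_abs]
    constructor
    · rintro (h | h)
      · right; linarith
      · left; linarith
    · rintro (h | h)
      · right; linarith
      · left; linarith
  have hdisjB : Disjoint {ω | S' ω + Y L ω < 0} {ω | 0 < S' ω - Y L ω} := by
    rw [Set.disjoint_left]
    intro ω h1 h2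
    simp only [Set.mem_setOf_eq] at h1 h2
    have := hYpos L ω
    linarith
  have hsetm : MeasurableSet {ω | |∑ i, ε i ω * Y i ω - ε L ω * Y L ω| ≤ Y L ω} :=
    measurableSet_le (hSm.sub ((hεm L).mul (hYm L))).abs (hYm L)
  have hq : P {ω | |∑ i, ε i ω * Y i ω - ε L ω * Y L ω| ≤ Y L ω}ᶜ = 2 * P A := by
    rw [hcompl, measure_union hdisjB hB2m, hkey, hPA, two_mul]
  rw [← hq, prob_compl_eq_one_sub hsetm,
    ENNReal.sub_sub_cancel ENNReal.one_ne_top prob_le_one]
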